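/- Let dA, dB, dC ≥ 1 and let ψ, φ : EuclideanSpace ℂ (Fin dA × Fin dB × Fin dC) be unit vectors with ⟪φ, ψ⟫ = 0. Then there exists an orthonormal basis (u_i)_{i : Fin dA} of EuclideanSpace ℂ (Fin dA) and, for each i : Fin dA, an orthonormal basis (v^i_j)_{j : Fin dB} of EuclideanSpace ℂ (Fin dB), such that for all i, j the doubly conditional states satisfy ⟪φ^{|u_i, v^i_j}, ψ^{|u_i, v^i_j}⟫ = 0. -/

import Mathlib

local notation "⟪" x ", " y "⟫" => @inner ℂ _ _ x y

open Complex Finset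

section WalgateAux

variable {E : Type*} [NormedAddCommGroup E] [InnerProductSpace ℂ E]

/-- Segment lemma: with orthonormal pair e, f, any convex combination of the diagonal
values is attained by a unit vector in their span. -/
lemma walgate_segment (T : E →ₗ[ℂ] E) (e f : E) (he : ‖e‖ = 1) (hf : ‖f‖ = 1)
    (hef : ⟪e, f⟫ = 0) (t : ℝ) (ht0 : 0 ≤ t) (ht1 : t ≤ 1) :
    ∃ x : E, ‖x‖ = 1 ∧ x ∈ Submodule.span ℂ ({e, f} : Set E) ∧
      ⟪x, T x⟫ = (1 - t : ℝ) * ⟪e, T e⟫ + (t : ℝ) * ⟪f, T f⟫ := by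
  set A := ⟪e, T e⟫ with hA
  set D := ⟪f, T f⟫ with hD
  set p := ⟪e, T f⟫ with hp
  set q := ⟪f, T e⟫ with hq
  by_cases hL : D - A = 0
  · refine ⟨e, he, Submodule.subset_span (by simp), ?_⟩
    have : D = A := by linear_combination hL
    rw [this]; push_cast; ring
  · set L : ℂ := D - A with hLdef
    set u : ℂ := L / (‖L‖ : ℂ) with hu
    have habsL : (‖L‖ : ℝ) ≠ 0 := by
      simpa using hL
    have huabs : ‖u‖ = 1 := by
      rw [hu, norm_div, Complex.norm_of_nonneg (norm_nonneg L)]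
      field_simp
    -- find θ₀ with the cross-term aligned with u
    set g : ℝ → ℝ := fun θ => ((Complex.exp (θ * Complex.I) * p
        + Complex.exp (-θ * Complex.I) * q) * (starRingEnd ℂ) u).im with hg
    have hgcont : Continuous g := by
      apply Complex.continuous_im.comp
      fun_prop
    have hganti : ∀ θ, g (θ + Real.pi) = - g θ := by
      intro θ
      have h1 : Complex.exp ((↑(θ + Real.pi)) * Complex.I) = - Complex.exp (θ * Complex.I) := by
        push_cast
        rw [add_mul, Complex.exp_add, Complex.exp_pi_mul_I]
        ring
      have h2 : Complex.exp ((-↑(θ + Real.pi)) * Complex.I) = - Complex.exp (-θ * Complex.I) := by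
        push_cast
        rw [neg_add, add_mul, Complex.exp_add]
        rw [show (-Real.pi : ℂ) * Complex.I = -(Real.pi * Complex.I) by ring, Complex.exp_neg,
          Complex.exp_pi_mul_I]
        simp
      simp only [hg, h1, h2]
      rw [← Complex.neg_im]
      congr 1
      ring
  
    have hθ : ∃ θ₀, g θ₀ = 0 := by
      rcases lt_trichotomy (g 0) 0 with h | h | h
      · have h2 : (0:ℝ) ∈ Set.Icc (g 0) (g Real.pi) := by
          constructor
          · exact le_of_lt h
          · rw [show Real.pi = 0 + Real.pi by ring, hganti 0]; linarith
        obtain ⟨θ₀, _, hθ₀⟩ := intermediate_value_Icc (le_of_lt Real.pi_pos) hgcont.continuousOn h2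
        exact ⟨θ₀, hθ₀⟩
      · exact ⟨0, h⟩
      · have h2 : (0:ℝ) ∈ Set.Icc (g Real.pi) (g 0) := by
          constructor
          · rw [show Real.pi = 0 + Real.pi by ring, hganti 0]; linarith
          · exact le_of_lt h
        obtain ⟨θ₀, _, hθ₀⟩ := intermediate_value_Icc' (le_of_lt Real.pi_pos) hgcont.continuousOn h2
        exact ⟨θ₀, hθ₀⟩
    obtain ⟨θ₀, hθ₀⟩ := hθ
    set ζ : ℂ := (Complex.exp (θ₀ * Complex.I) * p + Complex.exp (-θ₀ * Complex.I) * q)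
        * (starRingEnd ℂ) u with hζ
    set c : ℝ := ζ.re with hc
    have hζc : ζ = (c : ℂ) := by
      apply Complex.ext
      · simp [hc]
      · simpa [hg, hζ] using hθ₀
    have hcross : Complex.exp (θ₀ * Complex.I) * p + Complex.exp (-θ₀ * Complex.I) * q
        = (c : ℂ) * u := by
      have huu : (starRingEnd ℂ) u * u = 1 := by
        rw [mul_comm, Complex.mul_conj]
        norm_cast
        rw [← Complex.sq_norm]
        rw [huabs]; norm_num
      calc Complex.exp (θ₀ * Complex.I) * p + Complex.exp (-θ₀ * Complex.I) * q
          = (Complex.exp (θ₀ * Complex.I) * p + Complex.exp (-θ₀ * Complex.I) * q)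
            * ((starRingEnd ℂ) u * u) := by rw [huu, mul_one]
        _ = ζ * u := by rw [hζ]; ring
        _ = (c : ℂ) * u := by rw [hζc]
    -- find s₀
    set F : ℝ → ℝ := fun s => (t - s) * ‖L‖ - Real.sqrt (s * (1 - s)) * c with hF
    have hFcont : Continuous F := by fun_prop
    have hF0 : 0 ≤ F 0 := by
      simp only [hF]
      rw [show (0:ℝ) * (1 - 0) = 0 by ring, Real.sqrt_zero]
      have := norm_nonneg L
      nlinarith
    have hF1 : F 1 ≤ 0 := by
      simp only [hF]
      rw [show (1:ℝ) * (1 - 1) = 0 by ring, Real.sqrt_zero]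
      have := norm_nonneg L
      nlinarith
    have hs : ∃ s₀ ∈ Set.Icc (0:ℝ) 1, F s₀ = 0 := by
      obtain ⟨s₀, hmem, hs₀⟩ := intermediate_value_Icc' (by norm_num : (0:ℝ) ≤ 1)
        hFcont.continuousOn (⟨hF1, hF0⟩ : (0:ℝ) ∈ Set.Icc (F 1) (F 0))
      exact ⟨s₀, hmem, hs₀⟩
    obtain ⟨s₀, ⟨hs₀0, hs₀1⟩, hFs₀⟩ := hs
    set a : ℂ := (Real.sqrt (1 - s₀) : ℂ) with ha
    set b : ℂ := (Real.sqrt s₀ : ℂ) * Complex.exp (θ₀ * Complex.I) with hb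
    refine ⟨a • e + b • f, ?_, ?_, ?_⟩
    · -- norm 1
      have habs : ‖a • e + b • f‖ ^ 2 = 1 := by
        rw [norm_add_sq (𝕜 := ℂ)]
        have h1 : ⟪a • e, b • f⟫ = 0 := by
          rw [inner_smul_left, inner_smul_right, hef]; ring
        rw [h1]
        have h2 : ‖a‖ = Real.sqrt (1 - s₀) := by
          rw [ha, Complex.norm_of_nonneg (Real.sqrt_nonneg _)]
        have h3 : ‖b‖ = Real.sqrt s₀ := by
          rw [hb, norm_mul, Complex.norm_of_nonneg (Real.sqrt_nonneg _),
            Complex.norm_exp_ofReal_mul_I, mul_one]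
        simp only [norm_smul, he, hf, mul_one, h2, h3,
          map_zero, mul_zero, add_zero]
        rw [Real.sq_sqrt (by linarith), Real.sq_sqrt (by linarith)]
        ring
      have : ‖a • e + b • f‖ = Real.sqrt (‖a • e + b • f‖ ^ 2) := by
        rw [Real.sqrt_sq (norm_nonneg _)]
      rw [this, habs, Real.sqrt_one]
    · -- span membership
      apply Submodule.add_mem
      · exact Submodule.smul_mem _ _ (Submodule.subset_span (by simp))
      · exact Submodule.smul_mem _ _ (Submodule.subset_span (by simp))
    · -- the value
      have hexp : (starRingEnd ℂ) (Complex.exp (θ₀ * Complex.I))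
          = Complex.exp (-θ₀ * Complex.I) := by
        rw [← Complex.exp_conj]
        congr 1
        simp only [map_mul, Complex.conj_ofReal, Complex.conj_I]
        ring
      have hval : ⟪a • e + b • f, T (a • e + b • f)⟫
          = (starRingEnd ℂ) a * a * A + (starRingEnd ℂ) a * b * p
            + (starRingEnd ℂ) b * a * q + (starRingEnd ℂ) b * b * D := by
        simp only [map_add, map_smul, inner_add_left, inner_add_right,
          inner_smul_left, inner_smul_right, ← hA, ← hD, ← hp, ← hq]
        ring
      rw [hval]
      have hca : (starRingEnd ℂ) a = a := by
        rw [ha, Complex.conj_ofReal]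
      have hcb : (starRingEnd ℂ) b = (Real.sqrt s₀ : ℂ) * Complex.exp (-θ₀ * Complex.I) := by
        rw [hb, map_mul, Complex.conj_ofReal, hexp]
      have hsqrtmul : (Real.sqrt (1 - s₀) : ℝ) * Real.sqrt s₀ = Real.sqrt (s₀ * (1 - s₀)) := by
        rw [← Real.sqrt_mul (by linarith)]
        ring_nf
      have haa : (starRingEnd ℂ) a * a = ((1 - s₀ : ℝ) : ℂ) := by
        rw [hca, ha, ← Complex.ofReal_mul,
          Real.mul_self_sqrt (by linarith : (0:ℝ) ≤ 1 - s₀)]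
      have hbb : (starRingEnd ℂ) b * b = ((s₀ : ℝ) : ℂ) := by
        rw [hcb, hb]
        have : Complex.exp (-θ₀ * Complex.I) * Complex.exp (θ₀ * Complex.I) = 1 := by
          rw [← Complex.exp_add]; ring_nf; exact Complex.exp_zero
        calc (Real.sqrt s₀ : ℂ) * Complex.exp (-↑θ₀ * Complex.I)
            * ((Real.sqrt s₀ : ℂ) * Complex.exp (↑θ₀ * Complex.I))
            = ((Real.sqrt s₀ : ℂ) * (Real.sqrt s₀ : ℂ))
              * (Complex.exp (-↑θ₀ * Complex.I) * Complex.exp (↑θ₀ * Complex.I)) := by ring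
          _ = ((s₀ : ℝ) : ℂ) := by
              rw [this, mul_one]
              norm_cast
              rw [Real.mul_self_sqrt hs₀0]
      -- cross terms
      have hcrossterm : (starRingEnd ℂ) a * b * p + (starRingEnd ℂ) b * a * q
          = ((Real.sqrt (s₀ * (1 - s₀)) : ℝ) : ℂ) * ((c:ℂ) * u) := by
        rw [hca, hcb, ha, hb, ← hcross]
        push_cast
        rw [← hsqrtmul]
        push_cast
        ring
      have habsL' : ((‖L‖ : ℝ) : ℂ) ≠ 0 := by exact_mod_cast habsL
      have hLu : ((‖L‖ : ℝ) : ℂ) * u = L := by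
        rw [hu]
        field_simp
      have hkey : ((Real.sqrt (s₀ * (1 - s₀)) : ℝ) : ℂ) * (c:ℂ)
          = ((t - s₀ : ℝ):ℂ) * ((‖L‖ : ℝ):ℂ) := by
        norm_cast
        have h := hFs₀
        simp only [hF] at h
        linarith
      push_cast
      push_cast at haa hbb hcrossterm hkey hLu
      linear_combination A * haa + D * hbb + hcrossterm + u * hkey
        + ((t:ℂ) - (s₀:ℂ)) * hLu + ((t:ℂ) - (s₀:ℂ)) * hLdef

lemma walgate_convex (T : E →ₗ[ℂ] E) :
    ∀ (k : ℕ) (v : Fin k → E), Orthonormal ℂ v → ∀ (t : Fin k → ℝ),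
      (∀ i, 0 ≤ t i) → ∑ i, t i = 1 →
      ∃ x : E, ‖x‖ = 1 ∧ x ∈ Submodule.span ℂ (Set.range v) ∧
        ⟪x, T x⟫ = ∑ i, (t i : ℂ) * ⟪v i, T (v i)⟫ := by
  intro k
  induction k with
  | zero =>
    intro v hv t ht0 ht1
    simp at ht1
  | succ k ih =>
    intro v hv t ht0 ht1
    set s := t (Fin.last k) with hs
    have hs1 : s ≤ 1 := by
      rw [← ht1, Fin.sum_univ_castSucc]
      have : 0 ≤ ∑ i : Fin k, t (Fin.castSucc i) :=
        Finset.sum_nonneg fun i _ => ht0 _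
      linarith
    have hsum' : ∑ i : Fin k, t (Fin.castSucc i) = 1 - s := by
      rw [Fin.sum_univ_castSucc] at ht1; linarith
    by_cases hcase : s = 1
    · -- all other coefficients are zero
      have hzero : ∀ i : Fin k, t (Fin.castSucc i) = 0 := by
        intro i
        have h1 : ∑ i : Fin k, t (Fin.castSucc i) = 0 := by rw [hsum', hcase]; ring
        have := (Finset.sum_eq_zero_iff_of_nonneg (fun i _ => ht0 _)).mp h1
        exact this i (Finset.mem_univ i)
      refine ⟨v (Fin.last k), hv.1 _, Submodule.subset_span ⟨_, rfl⟩, ?_⟩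
      rw [Fin.sum_univ_castSucc]
      have : ∀ i : Fin k, ((t (Fin.castSucc i) : ℝ) : ℂ) * ⟪v (Fin.castSucc i), T (v (Fin.castSucc i))⟫ = 0 := by
        intro i; rw [hzero i]; simp
      rw [Finset.sum_congr rfl (fun i _ => this i), Finset.sum_const_zero, ← hs, hcase]
      push_cast
      ring
    · have hslt : s < 1 := lt_of_le_of_ne hs1 hcase
      set t' : Fin k → ℝ := fun i => t (Fin.castSucc i) / (1 - s) with ht'
      have ht'0 : ∀ i, 0 ≤ t' i := fun i => div_nonneg (ht0 _) (by linarith)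
      have ht'1 : ∑ i, t' i = 1 := by
        rw [ht']
        rw [← Finset.sum_div, hsum']
        exact div_self (ne_of_gt (by linarith : (0:ℝ) < 1 - s))
      obtain ⟨x', hx'n, hx'sp, hx'v⟩ := ih (v ∘ Fin.castSucc)
        (hv.comp _ (Fin.castSucc_injective k)) t' ht'0 ht'1
      -- x' is orthogonal to v (last)
      have hortho : ⟪x', v (Fin.last k)⟫ = 0 := by
        have : ∀ y ∈ Submodule.span ℂ (Set.range (v ∘ Fin.castSucc)), ⟪y, v (Fin.last k)⟫ = 0 := by
          intro y hy
          induction hy using Submodule.span_induction with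
          | mem z hz =>
            obtain ⟨i, rfl⟩ := hz
            exact hv.2 (Fin.castSucc_lt_last i).ne
          | zero => simp
          | add a b _ _ ha hb => rw [inner_add_left, ha, hb]; ring
          | smul c a _ ha => rw [inner_smul_left, ha]; ring
        exact this x' hx'sp
      obtain ⟨x, hxn, hxsp, hxv⟩ := walgate_segment T x' (v (Fin.last k)) hx'n (hv.1 _)
        hortho s (ht0 _) hs1
      refine ⟨x, hxn, ?_, ?_⟩
      · -- span membership
        have hsub : ({x', v (Fin.last k)} : Set E) ⊆ ↑(Submodule.span ℂ (Set.range v)) := by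
          intro z hz
          rcases hz with rfl | rfl
          · exact Submodule.span_mono (by rintro _ ⟨i, rfl⟩; exact ⟨Fin.castSucc i, rfl⟩) hx'sp
          · exact Submodule.subset_span ⟨Fin.last k, rfl⟩
        have h2 : Submodule.span ℂ ({x', v (Fin.last k)} : Set E) ≤ Submodule.span ℂ (Set.range v) := by
          rw [Submodule.span_le]
          exact hsub
        exact h2 hxsp
      · rw [hxv, hx'v, Fin.sum_univ_castSucc]
        rw [Finset.mul_sum]
        congr 1
        apply Finset.sum_congr rfl
        intro i _
        rw [ht']
        have : ((t (Fin.castSucc i) / (1 - s) : ℝ) : ℂ) = (t (Fin.castSucc i) : ℂ) / ((1-s : ℝ):ℂ) := by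
          push_cast; ring
        rw [this]
        have hne : ((1 - s : ℝ) : ℂ) ≠ 0 := by
          simp only [ne_eq, Complex.ofReal_eq_zero]
          intro h
          linarith
        field_simp
        have hne' : (1 - (s:ℂ)) ≠ 0 := by
          intro h
          apply hne
          push_cast
          linear_combination h
        rfl

lemma walgate_trace_indep {ι κ : Type*} [Fintype ι] [Fintype κ]
    (T : E →ₗ[ℂ] E) (b : OrthonormalBasis ι ℂ E) (c : OrthonormalBasis κ ℂ E) :
    ∑ i, ⟪b i, T (b i)⟫ = ∑ j, ⟪c j, T (c j)⟫ := by
  have h1 : ∀ i, ⟪b i, T (b i)⟫ = ∑ j, ⟪b i, c j⟫ * ⟪c j, T (b i)⟫ := fun i =>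
    (c.sum_inner_mul_inner _ _).symm
  have h2 : ∀ j, ∑ i, ⟪c j, T (b i)⟫ * ⟪b i, c j⟫ = ⟪c j, T (c j)⟫ := by
    intro j
    have := b.sum_repr' (c j)
    calc ∑ i, ⟪c j, T (b i)⟫ * ⟪b i, c j⟫
        = ∑ i, ⟪c j, T (⟪b i, c j⟫ • b i)⟫ := by
          apply Finset.sum_congr rfl
          intro i _
          rw [map_smul, inner_smul_right]
          ring
      _ = ⟪c j, T (∑ i, ⟪b i, c j⟫ • b i)⟫ := by
          rw [map_sum, inner_sum]
      _ = ⟪c j, T (c j)⟫ := by rw [this]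
  calc ∑ i, ⟪b i, T (b i)⟫ = ∑ i, ∑ j, ⟪b i, c j⟫ * ⟪c j, T (b i)⟫ :=
        Finset.sum_congr rfl fun i _ => h1 i
    _ = ∑ j, ∑ i, ⟪c j, T (b i)⟫ * ⟪b i, c j⟫ := by
        rw [Finset.sum_comm]
        apply Finset.sum_congr rfl; intro j _
        apply Finset.sum_congr rfl; intro i _
        ring
    _ = ∑ j, ⟪c j, T (c j)⟫ := Finset.sum_congr rfl fun j _ => h2 j

/-- Extend a unit vector `x` by an orthonormal basis of `(ℂ ∙ x)ᗮ` to an orthonormal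
basis of the whole space. -/
noncomputable def OrthonormalBasis.consOrthogonal [FiniteDimensional ℂ E] {n : ℕ}
    (x : E) (hx : ‖x‖ = 1)
    (c : OrthonormalBasis (Fin n) ℂ ((ℂ ∙ x)ᗮ : Submodule ℂ E)) :
    OrthonormalBasis (Fin (n + 1)) ℂ E :=
  OrthonormalBasis.mk (v := Fin.cons x (fun j => (c j : E)))
    (by
      have hxc : ∀ j : Fin n, ⟪x, (c j : E)⟫ = 0 := by
        intro j
        have h2 := (c j).2
        rw [Submodule.mem_orthogonal] at h2
        exact h2 x (Submodule.mem_span_singleton_self x)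
      constructor
      · intro i
        refine Fin.cases ?_ ?_ i
        · simpa using hx
        · intro j
          simpa [Submodule.norm_coe] using c.orthonormal.1 j
      · intro i j hij
        rcases Fin.eq_zero_or_eq_succ i with rfl | ⟨i', rfl⟩ <;>
          rcases Fin.eq_zero_or_eq_succ j with rfl | ⟨j', rfl⟩
        · exact absurd rfl hij
        · simp only [Fin.cons_zero, Fin.cons_succ]
          exact hxc j'
        · simp only [Fin.cons_zero, Fin.cons_succ]
          rw [← inner_conj_symm, hxc i', map_zero]
        · simp only [Fin.cons_succ]
          have hne : i' ≠ j' := fun h => hij (by rw [h])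
          rw [← Submodule.coe_inner]
          exact c.orthonormal.2 hne)
    (by
      rw [top_le_iff, ← Submodule.orthogonal_eq_bot_iff]
      rw [Submodule.eq_bot_iff]
      intro z hz
      rw [Submodule.mem_orthogonal] at hz
      have hzx : ⟪x, z⟫ = 0 := by
        apply hz
        exact Submodule.subset_span ⟨0, by simp⟩
      have hzK : z ∈ ((ℂ ∙ x)ᗮ : Submodule ℂ E) :=
        Submodule.mem_orthogonal_singleton_iff_inner_left.mpr
          (by rw [← inner_conj_symm, hzx, map_zero])
      set z' : ((ℂ ∙ x)ᗮ : Submodule ℂ E) := ⟨z, hzK⟩ with hz'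
      have hco : ∀ j : Fin n, ⟪c j, z'⟫ = 0 := by
        intro j
        have := hz (c j : E) (Submodule.subset_span ⟨Fin.succ j, by simp⟩)
        rw [Submodule.coe_inner]
        exact this
      have : z' = 0 := by
        have hrepr := c.sum_repr' z'
        rw [← hrepr]
        apply Finset.sum_eq_zero
        intro j _
        rw [hco j, zero_smul]
      have : (z' : E) = 0 := by rw [this]; rfl
      exact this)


lemma OrthonormalBasis.consOrthogonal_apply [FiniteDimensional ℂ E] {n : ℕ}
    (x : E) (hx : ‖x‖ = 1)
    (c : OrthonormalBasis (Fin n) ℂ ((ℂ ∙ x)ᗮ : Submodule ℂ E)) (i : Fin (n+1)) :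
    OrthonormalBasis.consOrthogonal x hx c i = (Fin.cons x (fun j => (c j : E)) : Fin (n+1) → E) i := by
  unfold OrthonormalBasis.consOrthogonal
  exact congrFun (OrthonormalBasis.coe_mk _ _) i

lemma walgate_zero_diag :
    ∀ (n : ℕ) (E : Type) (_ : NormedAddCommGroup E) (_ : InnerProductSpace ℂ E)
      (_ : FiniteDimensional ℂ E)
      (T : E →ₗ[ℂ] E) (e : OrthonormalBasis (Fin n) ℂ E),
      (∑ i, ⟪e i, T (e i)⟫ = 0) →
      ∃ w : OrthonormalBasis (Fin n) ℂ E, ∀ i, ⟪w i, T (w i)⟫ = 0 := by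
  intro n
  induction n with
  | zero =>
    intro E _ _ _ T e _
    exact ⟨e, fun i => absurd i.2 (by simp)⟩
  | succ n ih =>
    intro E _ _ _ T e htr
    -- find a unit vector x with ⟪x, T x⟫ = 0
    obtain ⟨x, hxn, -, hxv⟩ := walgate_convex T (n+1) e e.orthonormal
      (fun _ => 1 / (n+1)) (fun _ => by positivity)
      (by
        rw [Finset.sum_const, Finset.card_univ, Fintype.card_fin, nsmul_eq_mul]
        push_cast
        field_simp)
    have hxv0 : ⟪x, T x⟫ = 0 := by
      rw [hxv, ← Finset.mul_sum]
      have : ∑ i, ⟪e i, T (e i)⟫ = 0 := htr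
      rw [this, mul_zero]
    have hxne : x ≠ 0 := by
      intro h
      rw [h, norm_zero] at hxn
      norm_num at hxn
    -- finrank E = n + 1
    have hrank : Module.finrank ℂ E = n + 1 := by
      have := e.toBasis
      rw [Module.finrank_eq_card_basis this]
      simp
    haveI : Fact (Module.finrank ℂ E = n + 1) := ⟨hrank⟩
    -- orthonormal basis of the orthogonal complement
    set K : Submodule ℂ E := (ℂ ∙ x)ᗮ with hK
    let c : OrthonormalBasis (Fin n) ℂ K :=
      OrthonormalBasis.fromOrthogonalSpanSingleton n hxne
    -- compressed operator
    set T' : K →ₗ[ℂ] K :=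
      (K.orthogonalProjectionOnto).toLinearMap ∘ₗ T ∘ₗ K.subtype with hT'
    have hcomp : ∀ z : K, ⟪z, T' z⟫ = ⟪(z : E), T (z : E)⟫ := by
      intro z
      rw [hT']
      simp only [LinearMap.coe_comp, Function.comp_apply, ContinuousLinearMap.coe_coe,
        Submodule.coe_subtype]
      rw [Submodule.coe_inner]
      rw [← Submodule.coe_inner, Submodule.inner_orthogonalProjectionOnto_eq_of_mem_left]
    -- combined basis
    let f : OrthonormalBasis (Fin (n+1)) ℂ E := OrthonormalBasis.consOrthogonal x hxn c
    have hf : ∀ i, f i = (Fin.cons x (fun j => ((c j : E))) : Fin (n+1) → E) i := fun i =>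
      OrthonormalBasis.consOrthogonal_apply x hxn c i
    have hsum : ∑ j : Fin n, ⟪c j, T' (c j)⟫ = 0 := by
      have h1 : ∑ i, ⟪f i, T (f i)⟫ = 0 := by
        rw [walgate_trace_indep T f e]
        exact htr
      have h2 : ∑ i, ⟪f i, T (f i)⟫
          = ⟪x, T x⟫ + ∑ j : Fin n, ⟪(c j : E), T (c j : E)⟫ := by
        rw [Finset.sum_congr rfl (fun i _ => by rw [hf i])]
        rw [Fin.sum_univ_succ]
        simp only [Fin.cons_zero, Fin.cons_succ]
      rw [h2, hxv0, zero_add] at h1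
      rw [Finset.sum_congr rfl (fun j _ => hcomp (c j))]
      exact h1
    obtain ⟨w', hw'⟩ := ih K _ _ (inferInstance : FiniteDimensional ℂ K) T' c hsum
    refine ⟨OrthonormalBasis.consOrthogonal x hxn w', ?_⟩
    intro i
    rw [OrthonormalBasis.consOrthogonal_apply x hxn w' i]
    refine Fin.cases ?_ ?_ i
    · simpa using hxv0
    · intro j
      simp only [Fin.cons_succ]
      rw [← hcomp (w' j)]
      exact hw' j

lemma walgate_bipartite {d : ℕ} {K : Type*} [Fintype K] (φ ψ : Fin d × K → ℂ)
    (h : ∑ p : Fin d × K, (starRingEnd ℂ) (φ p) * ψ p = 0) :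
    ∃ u : OrthonormalBasis (Fin d) ℂ (EuclideanSpace ℂ (Fin d)),
      ∀ i, ∑ k : K, (starRingEnd ℂ) (∑ a, (starRingEnd ℂ) (u i a) * φ (a, k))
        * (∑ a, (starRingEnd ℂ) (u i a) * ψ (a, k)) = 0 := by
  classical
  set M : Fin d → Fin d → ℂ := fun a a' => ∑ k, (starRingEnd ℂ) (φ (a, k)) * ψ (a', k) with hM
  set T : EuclideanSpace ℂ (Fin d) →ₗ[ℂ] EuclideanSpace ℂ (Fin d) :=
    { toFun := fun x => WithLp.toLp 2 (fun a => ∑ a', (starRingEnd ℂ) (M a a') * x a')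
      map_add' := by
        intro x y
        ext a
        simp only [PiLp.add_apply, PiLp.toLp_apply]
        rw [← Finset.sum_add_distrib]
        apply Finset.sum_congr rfl
        intro a' _
        ring
      map_smul' := by
        intro c x
        ext a
        simp only [PiLp.smul_apply, PiLp.toLp_apply, smul_eq_mul, RingHom.id_apply]
        rw [Finset.mul_sum]
        apply Finset.sum_congr rfl
        intro a' _
        ring } with hT
  have hTapp : ∀ (x : EuclideanSpace ℂ (Fin d)) (a : Fin d),
      T x a = ∑ a', (starRingEnd ℂ) (M a a') * x a' := fun x a => rfl
  have hquad : ∀ x : EuclideanSpace ℂ (Fin d),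
      ⟪x, T x⟫ = ∑ a, ∑ a', (starRingEnd ℂ) (x a) * (starRingEnd ℂ) (M a a') * x a' := by
    intro x
    rw [PiLp.inner_apply]
    apply Finset.sum_congr rfl
    intro a _
    rw [hTapp x a, RCLike.inner_apply, Finset.sum_mul]
    apply Finset.sum_congr rfl
    intro a' _
    ring
  have key : ∀ x : EuclideanSpace ℂ (Fin d),
      ∑ k : K, (starRingEnd ℂ) (∑ a, (starRingEnd ℂ) (x a) * φ (a, k))
        * (∑ a, (starRingEnd ℂ) (x a) * ψ (a, k))
      = (starRingEnd ℂ) ⟪x, T x⟫ := by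
    intro x
    rw [hquad, map_sum]
    have lhs_eq : ∀ k : K, (starRingEnd ℂ) (∑ a, (starRingEnd ℂ) (x a) * φ (a, k))
        * (∑ a, (starRingEnd ℂ) (x a) * ψ (a, k))
        = ∑ a, ∑ a', (x a * (starRingEnd ℂ) (φ (a, k))) * ((starRingEnd ℂ) (x a') * ψ (a', k)) := by
      intro k
      rw [map_sum, Finset.sum_mul_sum]
      apply Finset.sum_congr rfl
      intro a _
      apply Finset.sum_congr rfl
      intro a' _
      simp only [map_mul, RingHomCompTriple.comp_apply, RingHom.id_apply]
      try ring
    rw [Finset.sum_congr rfl fun k _ => lhs_eq k]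
    rw [Finset.sum_comm]
    apply Finset.sum_congr rfl
    intro a _
    rw [Finset.sum_comm]
    have : (starRingEnd ℂ) (∑ a'' : Fin d, (starRingEnd ℂ) (x a) * (starRingEnd ℂ) (M a a'') * x a'')
        = ∑ a'', x a * M a a'' * (starRingEnd ℂ) (x a'') := by
      rw [map_sum]
      apply Finset.sum_congr rfl
      intro a'' _
      simp only [map_mul, RingHomCompTriple.comp_apply, RingHom.id_apply]
      try ring
    rw [this]
    apply Finset.sum_congr rfl
    intro a' _
    simp only [hM]
    rw [Finset.mul_sum, Finset.sum_mul]
    apply Finset.sum_congr rfl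
    intro k _
    ring
  -- trace is zero
  have htr : ∑ i, ⟪(EuclideanSpace.basisFun (Fin d) ℂ) i, T ((EuclideanSpace.basisFun (Fin d) ℂ) i)⟫ = 0 := by
    have hsingle : ∀ (a b : Fin d), (EuclideanSpace.basisFun (Fin d) ℂ) a b
        = if b = a then 1 else 0 := by
      intro a b
      rw [EuclideanSpace.basisFun_apply]
      exact EuclideanSpace.single_apply a 1 b
    have hdiag : ∀ a : Fin d, ⟪(EuclideanSpace.basisFun (Fin d) ℂ) a, T ((EuclideanSpace.basisFun (Fin d) ℂ) a)⟫
        = (starRingEnd ℂ) (M a a) := by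
      intro a
      rw [hquad]
      rw [Finset.sum_eq_single a]
      · rw [Finset.sum_eq_single a]
        · rw [hsingle a a]
          simp
        · intro b _ hb
          rw [hsingle a b, if_neg hb]
          ring
        · intro hb; exact absurd (Finset.mem_univ a) hb
      · intro b _ hb
        apply Finset.sum_eq_zero
        intro b' _
        rw [hsingle a b, if_neg hb]
        simp
      · intro hb; exact absurd (Finset.mem_univ a) hb
    rw [Finset.sum_congr rfl fun a _ => hdiag a, ← map_sum]
    have : ∑ a, M a a = 0 := by
      rw [hM]
      rw [Fintype.sum_prod_type] at h
      exact h
    rw [this, map_zero]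
  obtain ⟨w, hw⟩ := walgate_zero_diag d (EuclideanSpace ℂ (Fin d)) _ _ inferInstance T
    (EuclideanSpace.basisFun (Fin d) ℂ) htr
  exact ⟨w, fun i => by rw [key (w i), hw i, map_zero]⟩


end WalgateAux

/-- The doubly conditional state of a tripartite vector `ψ` relative to vectors `u` and
`v` on the first two subsystems: `(condState2 ψ u v) c = ∑ a b, conj (u a) * conj (v b) * ψ (a, b, c)`. -/
noncomputable def condState2 {dA dB dC : ℕ}
    (ψ : EuclideanSpace ℂ (Fin dA × Fin dB × Fin dC))
    (u : EuclideanSpace ℂ (Fin dA)) (v : EuclideanSpace ℂ (Fin dB)) :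
    EuclideanSpace ℂ (Fin dC) :=
  WithLp.toLp 2 fun c => ∑ a : Fin dA, ∑ b : Fin dB,
    (starRingEnd ℂ) (u a) * (starRingEnd ℂ) (v b) * ψ (a, b, c)

/-- Multipartite Walgate et al.: for two orthogonal tripartite pure states there are an
orthonormal basis `(u i)` for Alice and, for each outcome `i`, an orthonormal basis
`(v i j)` for Bob, such that all resulting doubly conditional states of Charlie's system
are orthogonal. -/
theorem exists_orthonormalBases_condState2_orthogonal
    (dA dB dC : ℕ) (hdA : 1 ≤ dA) (hdB : 1 ≤ dB) (hdC : 1 ≤ dC)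
    (ψ φ : EuclideanSpace ℂ (Fin dA × Fin dB × Fin dC))
    (hψ : ‖ψ‖ = 1) (hφ : ‖φ‖ = 1) (horth : ⟪φ, ψ⟫ = 0) :
    ∃ (u : OrthonormalBasis (Fin dA) ℂ (EuclideanSpace ℂ (Fin dA)))
      (v : Fin dA → OrthonormalBasis (Fin dB) ℂ (EuclideanSpace ℂ (Fin dB))),
      ∀ (i : Fin dA) (j : Fin dB),
        ⟪condState2 φ (u i) (v i j), condState2 ψ (u i) (v i j)⟫ = 0 := by
  classical
  -- view as bipartite A | (B × C)
  have h0 : ∑ p : Fin dA × (Fin dB × Fin dC), (starRingEnd ℂ) (φ p) * ψ p = 0 := by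
    rw [← horth, PiLp.inner_apply]
    apply Finset.sum_congr rfl
    intro p _
    rw [RCLike.inner_apply]; ring
  obtain ⟨u, hu⟩ := walgate_bipartite (K := Fin dB × Fin dC) φ ψ h0
  -- the conditional bipartite states
  set Φ : Fin dA → (Fin dB × Fin dC) → ℂ :=
    fun i bc => ∑ a, (starRingEnd ℂ) (u i a) * φ (a, bc) with hΦ
  set Ψ : Fin dA → (Fin dB × Fin dC) → ℂ :=
    fun i bc => ∑ a, (starRingEnd ℂ) (u i a) * ψ (a, bc) with hΨ
  have hstep1 : ∀ i, ∑ p : Fin dB × Fin dC, (starRingEnd ℂ) (Φ i p) * Ψ i p = 0 := by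
    intro i
    have h2 := hu i
    rw [← h2]
  have hstep2 : ∀ i, ∃ v : OrthonormalBasis (Fin dB) ℂ (EuclideanSpace ℂ (Fin dB)),
      ∀ j, ∑ c : Fin dC, (starRingEnd ℂ) (∑ b, (starRingEnd ℂ) (v j b) * Φ i (b, c))
        * (∑ b, (starRingEnd ℂ) (v j b) * Ψ i (b, c)) = 0 := fun i =>
    walgate_bipartite (K := Fin dC) (Φ i) (Ψ i) (hstep1 i)
  choose v hv using hstep2
  refine ⟨u, v, ?_⟩
  intro i j
  rw [PiLp.inner_apply]
  have hφc : ∀ c, condState2 φ (u i) (v i j) c = ∑ b, (starRingEnd ℂ) (v i j b) * Φ i (b, c) := by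
    intro c
    rw [show condState2 φ (u i) (v i j) c
      = ∑ a, ∑ b, (starRingEnd ℂ) (u i a) * (starRingEnd ℂ) (v i j b) * φ (a, b, c) from rfl]
    rw [Finset.sum_comm]
    apply Finset.sum_congr rfl
    intro b _
    rw [hΦ, Finset.mul_sum]
    apply Finset.sum_congr rfl
    intro a _
    ring
  have hψc : ∀ c, condState2 ψ (u i) (v i j) c = ∑ b, (starRingEnd ℂ) (v i j b) * Ψ i (b, c) := by
    intro c
    rw [show condState2 ψ (u i) (v i j) c
      = ∑ a, ∑ b, (starRingEnd ℂ) (u i a) * (starRingEnd ℂ) (v i j b) * ψ (a, b, c) from rfl]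
    rw [Finset.sum_comm]
    apply Finset.sum_congr rfl
    intro b _
    rw [hΨ, Finset.mul_sum]
    apply Finset.sum_congr rfl
    intro a _
    ring
  rw [← hv i j]
  apply Finset.sum_congr rfl
  intro c _
  rw [RCLike.inner_apply] at *
  rw [hφc c, hψc c]
  ring
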